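/- The q-deformed Witt superalgebra W^q, with even basis {L_n : n ∈ ℤ}, odd basis {G_n : n ∈ ℤ}, brackets [L_n, L_m] = ({m}-{n}) L_{n+m}, [L_n, G_m] = ({m+1}-{n}) G_{n+m}, [G_n, G_m] = 0, and twist map α(L_n) = (1+q^n) L_n, α(G_n) = (1+q^{n+1}) G_n, is a Hom-Lie superalgebra: the bracket is super-skew-symmetric and satisfies the super Hom-Jacobi identity (-1)^{|x||z|}[α(x),[y,z]] + (-1)^{|z||y|}[α(z),[x,y]] + (-1)^{|y||x|}[α(y),[z,x]] = 0 for homogeneous x, y, z. -/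

import Mathlib

noncomputable section

/-- The `q`-number `{m} = (1-q^m)/(1-q)`. -/
def qn (q : ℂ) (m : ℤ) : ℂ := (1 - q ^ m) / (1 - q)

/-- The `q`-deformed Witt superalgebra `W^q`, with even basis indexed by `Sum.inl n`
(the `L_n`) and odd basis indexed by `Sum.inr n` (the `G_n`). -/
abbrev Wq : Type := (ℤ ⊕ ℤ) →₀ ℂ

def L (n : ℤ) : Wq := Finsupp.single (Sum.inl n) 1
def G (n : ℤ) : Wq := Finsupp.single (Sum.inr n) 1

/-- Bracket of `W^q` on basis elements:
`[L_n, L_m] = ({m}-{n}) L_{n+m}`, `[L_n, G_m] = ({m+1}-{n}) G_{n+m}`,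
`[G_m, L_n] = -[L_n, G_m]`, `[G_n, G_m] = 0`. -/
def brBasis (q : ℂ) : ℤ ⊕ ℤ → ℤ ⊕ ℤ → Wq
  | Sum.inl n, Sum.inl m => (qn q m - qn q n) • L (n + m)
  | Sum.inl n, Sum.inr m => (qn q (m + 1) - qn q n) • G (n + m)
  | Sum.inr m, Sum.inl n => -((qn q (m + 1) - qn q n) • G (n + m))
  | Sum.inr _, Sum.inr _ => 0

/-- The bilinear extension of the bracket to `W^q`. -/
def br (q : ℂ) (x y : Wq) : Wq :=
  x.sum fun a ca => y.sum fun b cb => (ca * cb) • brBasis q a b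

/-- The twist map `α(L_n) = (1+q^n) L_n`, `α(G_n) = (1+q^{n+1}) G_n`. -/
def alphaW (q : ℂ) (x : Wq) : Wq :=
  x.sum fun a ca =>
    match a with
    | Sum.inl n => (ca * (1 + q ^ n)) • L n
    | Sum.inr n => (ca * (1 + q ^ (n + 1))) • G n

/-- `par false x`: `x` is even (supported on the `L_n`);
`par true x`: `x` is odd (supported on the `G_n`). -/
def par (i : Bool) (x : Wq) : Prop :=
  if i then ∀ n, x (Sum.inl n) = 0 else ∀ n, x (Sum.inr n) = 0

/-- The sign `(-1)^{ij}` for parities `i, j`. -/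
def sB (i j : Bool) : ℂ := if i && j then -1 else 1

end

noncomputable section
open Finsupp

lemma br_zero_left (q : ℂ) (y : Wq) : br q 0 y = 0 := by
  simp [br]

lemma br_zero_right (q : ℂ) (x : Wq) : br q x 0 = 0 := by
  simp [br]

lemma br_add_left (q : ℂ) (x x' y : Wq) :
    br q (x + x') y = br q x y + br q x' y := by
  unfold br
  rw [Finsupp.sum_add_index']
  · intro a; simp
  · intro a b₁ b₂; rw [← Finsupp.sum_add]; apply Finsupp.sum_congr; intro b _
    rw [add_mul, add_smul]

lemma br_add_right (q : ℂ) (x y y' : Wq) :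
    br q x (y + y') = br q x y + br q x y' := by
  unfold br
  rw [← Finsupp.sum_add]
  apply Finsupp.sum_congr; intro a _
  rw [Finsupp.sum_add_index']
  · intro b; simp
  · intro b b₁ b₂; rw [mul_add, add_smul]

lemma br_smul_right (q : ℂ) (c : ℂ) (x y : Wq) :
    br q x (c • y) = c • br q x y := by
  unfold br
  rw [Finsupp.smul_sum]
  apply Finsupp.sum_congr; intro a _
  rw [Finsupp.sum_smul_index, Finsupp.smul_sum]
  · apply Finsupp.sum_congr; intro b _
    rw [smul_smul]; ring_nf
  · intro b; simp

lemma br_single_single (q : ℂ) (a b : ℤ ⊕ ℤ) (c d : ℂ) :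
    br q (Finsupp.single a c) (Finsupp.single b d) = (c * d) • brBasis q a b := by
  unfold br
  rw [Finsupp.sum_single_index, Finsupp.sum_single_index]
  · simp
  · rw [Finsupp.sum_single_index] <;> simp

end
noncomputable section

def lam (q : ℂ) : ℤ ⊕ ℤ → ℂ
  | Sum.inl n => 1 + q ^ n
  | Sum.inr n => 1 + q ^ (n + 1)

lemma alphaW_zero (q : ℂ) : alphaW q 0 = 0 := by simp [alphaW]

lemma alphaW_single (q : ℂ) (a : ℤ ⊕ ℤ) (c : ℂ) :
    alphaW q (Finsupp.single a c) = Finsupp.single a (c * lam q a) := by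
  unfold alphaW
  rw [Finsupp.sum_single_index]
  · cases a <;> simp [lam, L, G, Finsupp.smul_single]
  · cases a <;> simp [L, G]

lemma alphaW_add (q : ℂ) (x y : Wq) : alphaW q (x + y) = alphaW q x + alphaW q y := by
  unfold alphaW
  rw [Finsupp.sum_add_index']
  · intro a; cases a <;> simp
  · intro a b₁ b₂; cases a <;> · simp [add_mul, add_smul]

lemma mem_support_par {i : Bool} {x : Wq} (h : par i x) {a : ℤ ⊕ ℤ}
    (ha : a ∈ x.support) : a.isRight = i := by
  rcases a with n | n <;> cases i <;> simp_all [par, Finsupp.mem_support_iff]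

lemma par_ind (i : Bool) (P : Wq → Prop) (h0 : P 0)
    (hadd : ∀ x y, P x → P y → P (x + y))
    (hs : ∀ (a : ℤ ⊕ ℤ) (c : ℂ), a.isRight = i → P (Finsupp.single a c)) :
    ∀ x : Wq, par i x → P x := by
  intro x
  induction x using Finsupp.induction with
  | zero => intro _; exact h0
  | single_add a c f haf hc ih =>
    intro hpar
    have hai : a.isRight = i := by
      by_contra hne
      have hxa : (Finsupp.single a c + f) a = c := by
        simp [Finsupp.single_apply, Finsupp.notMem_support_iff.mp haf]
      rcases a with n | n <;> cases i <;> simp_all [par] <;>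
        · have h2 := hpar n; simp_all [Finsupp.single_eq_same]
    have hpf : par i f := by
      have key : ∀ b : ℤ ⊕ ℤ, b.isRight ≠ i → f b = 0 := by
        intro b hb
        have hba : b ≠ a := fun h => hb (h ▸ hai)
        have : (Finsupp.single a c + f) b = f b := by
          simp [Finsupp.single_apply, Ne.symm hba]
        rcases b with n | n <;> cases i <;> simp_all [par] <;>
        · have h2 := hpar n; simp_all [Finsupp.single_apply]
      cases i <;> · intro n; exact key _ (by simp)
    exact hadd _ _ (hs a c hai) (ih hpf)

end
noncomputable section

lemma brBasis_skew (q : ℂ) (a b : ℤ ⊕ ℤ) :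
    brBasis q a b = -(sB a.isRight b.isRight) • brBasis q b a := by
  rcases a with n | n <;> rcases b with m | m <;>
    simp [brBasis, sB, add_comm m n] <;> module

theorem part1 (q : ℂ) : ∀ (i j : Bool) (x y : Wq), par i x → par j y →
    br q x y = -(sB i j) • br q y x := by
  intro i j x y hx hy
  revert y
  refine par_ind i (fun x => ∀ y, par j y → br q x y = -(sB i j) • br q y x) ?_ ?_ ?_ x hx
  · intro y hy; simp [br_zero_left, br_zero_right]
  · intro x₁ x₂ h1 h2 y hy
    rw [br_add_left, h1 y hy, h2 y hy, br_add_right, smul_add]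
  · intro a c hai y hy
    refine par_ind j (fun y => br q (Finsupp.single a c) y
        = -(sB i j) • br q y (Finsupp.single a c)) ?_ ?_ ?_ y hy
    · simp [br_zero_left, br_zero_right]
    · intro y₁ y₂ h1 h2
      rw [br_add_right, h1, h2, br_add_left, smul_add]
    · intro b d hbj
      rw [br_single_single, br_single_single, ← hai, ← hbj,
        brBasis_skew q a b, smul_smul, smul_smul, mul_comm d c, mul_comm]

end
noncomputable section

lemma br_neg_right (q : ℂ) (x y : Wq) : br q x (-y) = -br q x y := by
  have := br_smul_right q (-1) x y; simpa using this

lemma br_single_smul_single (q : ℂ) (a d : ℤ ⊕ ℤ) (ca s : ℂ) :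
    br q (Finsupp.single a ca) (s • Finsupp.single d (1:ℂ)) = (ca * s) • brBasis q a d := by
  rw [Finsupp.smul_single, smul_eq_mul, mul_one, br_single_single]

lemma jacobiBasis (q : ℂ) (hq0 : q ≠ 0) (hq1 : q ≠ 1) (a b c : ℤ ⊕ ℤ) :
    sB a.isRight c.isRight • br q (Finsupp.single a (lam q a)) (brBasis q b c)
      + sB c.isRight b.isRight • br q (Finsupp.single c (lam q c)) (brBasis q a b)
      + sB b.isRight a.isRight • br q (Finsupp.single b (lam q b)) (brBasis q c a) = 0 := by
  have h1q : (1:ℂ) - q ≠ 0 := sub_ne_zero.mpr (Ne.symm hq1)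
  rcases a with n | n <;> rcases b with m | m <;> rcases c with k | k <;>
    simp only [brBasis, sB, lam, L, G, Sum.isRight_inl, Sum.isRight_inr,
      Bool.and_false, Bool.false_and, Bool.and_true, Bool.true_and, Bool.and_self,
      br_neg_right, br_single_smul_single, br_zero_right, smul_smul, smul_zero,
      smul_neg, neg_neg, neg_zero, add_zero, zero_add, if_true, if_false,
      ite_true, ite_false, one_mul, mul_one, one_smul, Bool.false_eq_true, Bool.true_eq_false]
  case inl.inl.inl =>
    rw [show k + (n + m) = n + (m + k) by ring, show m + (k + n) = n + (m + k) by ring,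
      ← add_smul, ← add_smul]
    apply smul_eq_zero_of_left
    simp only [qn, zpow_add₀ hq0, zpow_one]
    ring
  case inl.inl.inr =>
    simp only [← neg_smul]
    rw [show n + m + k = n + (m + k) by ring, show m + (n + k) = n + (m + k) by ring,
      ← add_smul, ← add_smul]
    apply smul_eq_zero_of_left
    simp only [qn, zpow_add₀ hq0, zpow_one]
    ring
  case inl.inr.inl =>
    simp only [← neg_smul]
    rw [show n + (k + m) = k + (n + m) by ring, show k + n + m = k + (n + m) by ring,
      ← add_smul, ← add_smul]
    apply smul_eq_zero_of_left
    simp only [qn, zpow_add₀ hq0, zpow_one]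
    ring
  case inr.inl.inl =>
    simp only [← neg_smul]
    rw [show m + k + n = k + (m + n) by ring, show m + (k + n) = k + (m + n) by ring,
      ← add_smul, ← add_smul]
    apply smul_eq_zero_of_left
    simp only [qn, zpow_add₀ hq0, zpow_one]
    ring

end
noncomputable section

lemma br_smul_left (q : ℂ) (c : ℂ) (x y : Wq) :
    br q (c • x) y = c • br q x y := by
  unfold br
  rw [Finsupp.sum_smul_index, Finsupp.smul_sum]
  · apply Finsupp.sum_congr; intro a _
    rw [Finsupp.smul_sum]
    apply Finsupp.sum_congr; intro b _
    rw [smul_smul]; ring_nf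
  · intro a; simp

theorem part2 (q : ℂ) (hq0 : q ≠ 0) (hq1 : q ≠ 1) :
    ∀ (i j k : Bool) (x y z : Wq), par i x → par j y → par k z →
      sB i k • br q (alphaW q x) (br q y z)
        + sB k j • br q (alphaW q z) (br q x y)
        + sB j i • br q (alphaW q y) (br q z x) = 0 := by
  intro i j k x y z hx hy hz
  revert y z
  refine par_ind i (fun x => ∀ y z, par j y → par k z →
      sB i k • br q (alphaW q x) (br q y z)
        + sB k j • br q (alphaW q z) (br q x y)
        + sB j i • br q (alphaW q y) (br q z x) = 0) ?_ ?_ ?_ x hx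
  · intro y z _ _
    simp [alphaW_zero, br_zero_left, br_zero_right]
  · intro x₁ x₂ h1 h2 y z hy hz
    have e1 := h1 y z hy hz
    have e2 := h2 y z hy hz
    simp only [alphaW_add, br_add_left, br_add_right, smul_add]
    linear_combination (norm := abel) e1 + e2
  · intro a ca hai y z hy hz
    revert z
    refine par_ind j (fun y => ∀ z, par k z →
        sB i k • br q (alphaW q (Finsupp.single a ca)) (br q y z)
          + sB k j • br q (alphaW q z) (br q (Finsupp.single a ca) y)
          + sB j i • br q (alphaW q y) (br q z (Finsupp.single a ca)) = 0) ?_ ?_ ?_ y hy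
    · intro z _
      simp [alphaW_zero, br_zero_left, br_zero_right]
    · intro y₁ y₂ h1 h2 z hz
      have e1 := h1 z hz
      have e2 := h2 z hz
      simp only [alphaW_add, br_add_left, br_add_right, smul_add]
      linear_combination (norm := abel) e1 + e2
    · intro b cb hbj z hz
      refine par_ind k (fun z =>
          sB i k • br q (alphaW q (Finsupp.single a ca)) (br q (Finsupp.single b cb) z)
            + sB k j • br q (alphaW q z) (br q (Finsupp.single a ca) (Finsupp.single b cb))
            + sB j i • br q (alphaW q (Finsupp.single b cb)) (br q z (Finsupp.single a ca)) = 0)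
          ?_ ?_ ?_ z hz
      · simp [alphaW_zero, br_zero_left, br_zero_right]
      · intro z₁ z₂ e1 e2
        simp only [alphaW_add, br_add_left, br_add_right, smul_add]
        linear_combination (norm := abel) e1 + e2
      · intro c cc hck
        rw [alphaW_single, alphaW_single, alphaW_single,
          br_single_single, br_single_single, br_single_single]
        simp only [← Finsupp.smul_single']
        simp only [br_smul_left, br_smul_right]
        rw [← hai, ← hbj, ← hck]
        have J := jacobiBasis q hq0 hq1 a b c
        linear_combination (norm := module) (ca * (cb * cc)) • J

end


/-- `W^q` is a Hom-Lie superalgebra: super-skew-symmetry and the super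
Hom-Jacobi identity hold for homogeneous elements. -/
theorem stmt1 (q : ℂ) (hq0 : q ≠ 0) (hq1 : q ≠ 1) :
    (∀ (i j : Bool) (x y : Wq), par i x → par j y →
      br q x y = -(sB i j) • br q y x) ∧
    (∀ (i j k : Bool) (x y z : Wq), par i x → par j y → par k z →
      sB i k • br q (alphaW q x) (br q y z)
        + sB k j • br q (alphaW q z) (br q x y)
        + sB j i • br q (alphaW q y) (br q z x) = 0) :=
  ⟨part1 q, part2 q hq0 hq1⟩
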